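/- Let $\mu$ be a probability measure on $\mathbb{R}$ supported in $[0,+\infty)$, $\sigma>0$, $c\in(0,1]$, $\gamma \geq 0$. Define for $z \in \mathbb{C}\setminus\mathbb{R}$, $\tau(z) = (1-\sigma^2 c\, g_\mu(z))z - \frac{\gamma}{1-\sigma^2 c\, g_\mu(z)} - \sigma^2(1-c)$, where $g_\mu$ is the Stieltjes transform of $\mu$. Then $|\Im \tau(z)| \geq |\Im z|$, and in particular $|\tau(z)|^{-1} \leq |\Im z|^{-1}$. -/

import Mathlib

open MeasureTheory

/-- For a probability measure `μ` supported in `[0,∞)` with Stieltjes transform `g_μ`,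
`σ > 0`, `c ∈ (0,1]`, `γ ≥ 0`, the quantity
`τ(z) = (1 - σ²c g_μ(z)) z - γ/(1 - σ²c g_μ(z)) - σ²(1-c)` satisfies
`|Im τ(z)| ≥ |Im z|`, and in particular `|τ(z)|⁻¹ ≤ |Im z|⁻¹`. -/
theorem im_tau_lower_bound (μ : Measure ℝ) [IsProbabilityMeasure μ]
    (hsupp : μ (Set.Iio 0) = 0) (σ c γ : ℝ) (hσ : 0 < σ) (hc0 : 0 < c) (hc1 : c ≤ 1)
    (hγ : 0 ≤ γ) (z : ℂ) (hz : z.im ≠ 0) :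
    let g : ℂ := ∫ t, (z - (t : ℂ))⁻¹ ∂μ
    let τ : ℂ := (1 - ((σ ^ 2 * c : ℝ) : ℂ) * g) * z -
      (γ : ℂ) / (1 - ((σ ^ 2 * c : ℝ) : ℂ) * g) - ((σ ^ 2 * (1 - c) : ℝ) : ℂ)
    |τ.im| ≥ |z.im| ∧ ‖τ‖⁻¹ ≤ |z.im|⁻¹ := by
  intro g τ
  set k : ℝ := σ ^ 2 * c with hkdef
  have hk : 0 < k := mul_pos (pow_pos hσ 2) hc0
  have hne : ∀ t : ℝ, z - (t : ℂ) ≠ 0 := by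
    intro t h
    apply hz
    have := congrArg Complex.im h
    simpa using this
  have hns : ∀ t : ℝ, 0 < Complex.normSq (z - t) := fun t => Complex.normSq_pos.2 (hne t)
  have hnslb : ∀ t : ℝ, z.im ^ 2 ≤ Complex.normSq (z - t) := by
    intro t
    have : Complex.normSq (z - t) = (z.re - t) ^ 2 + z.im ^ 2 := by
      simp [Complex.normSq_apply, sq]
    nlinarith [sq_nonneg (z.re - t)]
  have hcont : Continuous fun t : ℝ => (z - (t : ℂ))⁻¹ :=
    ((continuous_const.sub Complex.continuous_ofReal)).inv₀ hne
  have hint : Integrable (fun t : ℝ => (z - (t : ℂ))⁻¹) μ := by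
    refine Integrable.mono' (integrable_const (|z.im|⁻¹)) hcont.aestronglyMeasurable ?_
    filter_upwards with t
    rw [norm_inv]
    refine inv_anti₀ (abs_pos.2 hz) ?_
    calc |z.im| = |(z - (t:ℂ)).im| := by simp
      _ ≤ ‖z - (t:ℂ)‖ := Complex.abs_im_le_norm _
      _ = ‖z - (t:ℂ)‖ := rfl
  -- I1
  have hcont1 : Continuous fun t : ℝ => (Complex.normSq (z - t))⁻¹ :=
    (Complex.continuous_normSq.comp (continuous_const.sub Complex.continuous_ofReal)).inv₀
      fun t => (hns t).ne'
  have hint1 : Integrable (fun t : ℝ => (Complex.normSq (z - t))⁻¹) μ := by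
    refine Integrable.mono' (integrable_const ((z.im ^ 2)⁻¹)) hcont1.aestronglyMeasurable ?_
    filter_upwards with t
    rw [Real.norm_eq_abs, abs_of_pos (inv_pos.2 (hns t))]
    exact inv_anti₀ (pow_pos (abs_pos.2 hz) 2 |>.trans_le (by rw [sq_abs])) (hnslb t)
  set I1 : ℝ := ∫ t, (Complex.normSq (z - t))⁻¹ ∂μ with hI1def
  have hI1 : 0 < I1 := by
    rw [hI1def]
    rw [integral_pos_iff_support_of_nonneg (fun t => le_of_lt (inv_pos.2 (hns t))) hint1]
    have : Function.support (fun t : ℝ => (Complex.normSq (z - t))⁻¹) = Set.univ := by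
      ext t; simp [Function.mem_support, (hns t).ne']
    rw [this]
    simp
  -- im of g
  have himg : g.im = -z.im * I1 := by
    have := integral_im (𝕜 := ℂ) hint
    simp only [RCLike.im_eq_complex_im] at this
    rw [hI1def, ← integral_const_mul, show g.im = (∫ t, (z - (t:ℂ))⁻¹ ∂μ).im from rfl, ← this]
    congr 1
    ext t
    rw [Complex.inv_im]
    have : (z - (t:ℂ)).im = z.im := by simp
    rw [this]
    field_simp
  set w : ℂ := 1 - (k : ℂ) * g with hwdef
  have hwim : w.im = k * z.im * I1 := by
    rw [hwdef]
    simp [Complex.sub_im, Complex.mul_im, himg]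
    ring
  have hwim_ne : w.im ≠ 0 := by
    rw [hwim]
    exact mul_ne_zero (mul_ne_zero hk.ne' hz) hI1.ne'
  have hw_ne : w ≠ 0 := fun h => hwim_ne (by rw [h]; rfl)
  have hnw : 0 < Complex.normSq w := Complex.normSq_pos.2 hw_ne
  -- J
  set J : ℝ := ∫ t, t * (Complex.normSq (z - t))⁻¹ ∂μ with hJdef
  have hJ : 0 ≤ J := by
    refine integral_nonneg_of_ae ?_
    have hae : ∀ᵐ t ∂μ, (0:ℝ) ≤ t := by
      rw [ae_iff]
      convert hsupp using 2
      ext t; simp [Set.mem_Iio]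
    filter_upwards [hae] with t ht
    exact mul_nonneg ht (le_of_lt (inv_pos.2 (hns t)))
  -- im of g * z
  have himgz : (g * z).im = -z.im * J := by
    have hint2 : Integrable (fun t : ℝ => (z - (t:ℂ))⁻¹ * z) μ := hint.mul_const z
    have h1 : g * z = ∫ t, (z - (t:ℂ))⁻¹ * z ∂μ := (integral_mul_const z _).symm
    have := integral_im (𝕜 := ℂ) hint2
    simp only [RCLike.im_eq_complex_im] at this
    rw [h1, ← this, hJdef, ← integral_const_mul]
    congr 1
    ext t
    have hzt : (z - (t:ℂ)) ≠ 0 := hne t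
    have : (z - (t:ℂ))⁻¹ * z = 1 + (t:ℂ) * (z - t)⁻¹ := by
      field_simp
      ring
    rw [this]
    simp [Complex.add_im, Complex.mul_im, Complex.inv_im, Complex.inv_re]
    field_simp
  -- im of τ
  have himτ : τ.im = z.im * (1 + k * J + γ * k * I1 / Complex.normSq w) := by
    show (w * z - (γ:ℂ) / w - ((σ ^ 2 * (1 - c) : ℝ) : ℂ)).im = _
    have h2 : (w * z).im = z.im + k * (z.im * J) := by
      rw [hwdef]
      have : (1 - (k:ℂ) * g) * z = z - (k:ℂ) * (g * z) := by ring
      rw [this]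
      simp [Complex.sub_im, Complex.mul_im, himgz]
    have h3 : ((γ:ℂ) / w).im = -(γ * (k * z.im * I1) / Complex.normSq w) := by
      rw [div_eq_mul_inv]
      simp [Complex.mul_im, Complex.inv_im, hwim]
      ring
    rw [Complex.sub_im, Complex.sub_im, h2, h3, Complex.ofReal_im]
    field_simp
    ring
  have hA : 1 ≤ 1 + k * J + γ * k * I1 / Complex.normSq w := by
    have t1 : 0 ≤ k * J := mul_nonneg hk.le hJ
    have t2 : 0 ≤ γ * k * I1 / Complex.normSq w :=
      div_nonneg (mul_nonneg (mul_nonneg hγ hk.le) hI1.le) hnw.le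
    linarith
  have hmain : |z.im| ≤ |τ.im| := by
    rw [himτ, abs_mul]
    nlinarith [abs_pos.2 hz, abs_of_nonneg (by linarith : (0:ℝ) ≤ 1 + k * J + γ * k * I1 / Complex.normSq w)]
  refine ⟨hmain, ?_⟩
  refine inv_anti₀ (abs_pos.2 hz) ?_
  exact hmain.trans (Complex.abs_im_le_norm τ)
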